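/- Suppose M and M' are 2×2 Hermitian matrices with eigenvalues ±1 (i.e., involutions with trace 0, hence of the form M = a·σ, M' = a'·σ for unit vectors a, a' ∈ ℝ³, where σ = (X,Y,Z)). If for every qubit density matrix ρ₁ there exist density matrices ρ₂, ρ₃, ρ₄ with tr(Mρ₁) = tr(Mρ₂) = −tr(Mρ₃) = −tr(Mρ₄), tr(M'ρ₁) = −tr(M'ρ₂) = −tr(M'ρ₃) = tr(M'ρ₄), and (1/2)(ρ₁ + ρ₃) = (1/2)(ρ₂ + ρ₄), then a · a' = 0, i.e., M and M' anticommute. -/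

import Mathlib

open Matrix ComplexOrder

/-- A qubit density matrix: positive semidefinite with unit trace. -/
def IsDensityMatrix (ρ : Matrix (Fin 2) (Fin 2) ℂ) : Prop := ρ.PosSemidef ∧ ρ.trace = 1

lemma trace_conjTranspose_mul_self_eq_zero' {m n : Type*} [Fintype m] [Fintype n]
    [DecidableEq n] {A : Matrix m n ℂ} (h : (Aᴴ * A).trace = 0) : A = 0 := by
  rw [Matrix.trace] at h
  have hnn : ∀ j ∈ Finset.univ, (0:ℂ) ≤ (Aᴴ * A).diag j := fun j _ => by
    simpa [Matrix.diag, Matrix.mul_apply, Matrix.conjTranspose_apply, dotProduct] using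
      dotProduct_star_self_nonneg (fun i => A i j)
  have := (Finset.sum_eq_zero_iff_of_nonneg hnn).mp h
  ext i j
  have hj := this j (Finset.mem_univ j)
  simp only [Matrix.diag, Matrix.mul_apply, Matrix.conjTranspose_apply] at hj
  have : dotProduct (star fun i => A i j) (fun i => A i j) = 0 := by
    simpa [dotProduct] using hj
  have := dotProduct_star_self_eq_zero.mp this
  simpa using congrFun this i

/-- For PSD matrices, zero trace of the product forces the product to vanish. -/
lemma psd_mul_psd_trace_zero {n : Type*} [Fintype n] [DecidableEq n]
    {A B : Matrix n n ℂ} (hA : A.PosSemidef) (hB : B.PosSemidef)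
    (h : (A * B).trace = 0) : A * B = 0 := by
  obtain ⟨a, ha⟩ : ∃ a : Matrix n n ℂ, A = aᴴ * a := by
    open scoped MatrixOrder in exact CStarAlgebra.nonneg_iff_eq_star_mul_self.mp hA.nonneg
  obtain ⟨b, hb⟩ : ∃ b : Matrix n n ℂ, B = bᴴ * b := by
    open scoped MatrixOrder in exact CStarAlgebra.nonneg_iff_eq_star_mul_self.mp hB.nonneg
  have key : (a * bᴴ) = 0 := by
    apply trace_conjTranspose_mul_self_eq_zero'
    have e1 : (a * bᴴ)ᴴ * (a * bᴴ) = b * (aᴴ * a) * bᴴ := by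
      rw [Matrix.conjTranspose_mul, Matrix.conjTranspose_conjTranspose]
      noncomm_ring
    rw [e1, Matrix.trace_mul_cycle, Matrix.trace_mul_comm, ← ha, ← hb, h]
  rw [ha, hb, Matrix.mul_assoc, ← Matrix.mul_assoc a, key]
  simp

/-- Trace-zero 2×2 matrices: the anticommutator is the trace of the product times identity. -/
lemma anticomm_eq_trace_smul_one (A B : Matrix (Fin 2) (Fin 2) ℂ)
    (hA : A.trace = 0) (hB : B.trace = 0) :
    A * B + B * A = (A * B).trace • (1 : Matrix (Fin 2) (Fin 2) ℂ) := by
  have hA' : A 1 1 = -A 0 0 := by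
    have := hA; simp [Matrix.trace, Matrix.diag, Fin.sum_univ_two] at this; linear_combination this
  have hB' : B 1 1 = -B 0 0 := by
    have := hB; simp [Matrix.trace, Matrix.diag, Fin.sum_univ_two] at this; linear_combination this
  ext i j
  fin_cases i <;> fin_cases j <;>
    simp [Matrix.trace, Matrix.diag, Matrix.mul_apply, Fin.sum_univ_two, Matrix.one_apply,
      hA', hB'] <;> ring

theorem A1sq_symmetry_forces_anticommutation
    (M M' : Matrix (Fin 2) (Fin 2) ℂ)
    (hM : M.IsHermitian) (hM' : M'.IsHermitian)
    (hMinv : M * M = 1) (hM'inv : M' * M' = 1)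
    (hMtr : M.trace = 0) (hM'tr : M'.trace = 0)
    (horbit : ∀ ρ₁ : Matrix (Fin 2) (Fin 2) ℂ, IsDensityMatrix ρ₁ →
      ∃ ρ₂ ρ₃ ρ₄ : Matrix (Fin 2) (Fin 2) ℂ,
        IsDensityMatrix ρ₂ ∧ IsDensityMatrix ρ₃ ∧ IsDensityMatrix ρ₄ ∧
        (M * ρ₁).trace = (M * ρ₂).trace ∧
        (M * ρ₁).trace = -(M * ρ₃).trace ∧
        (M * ρ₁).trace = -(M * ρ₄).trace ∧
        (M' * ρ₁).trace = -(M' * ρ₂).trace ∧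
        (M' * ρ₁).trace = -(M' * ρ₃).trace ∧
        (M' * ρ₁).trace = (M' * ρ₄).trace ∧
        (1 / 2 : ℂ) • (ρ₁ + ρ₃) = (1 / 2 : ℂ) • (ρ₂ + ρ₄)) :
    M * M' + M' * M = 0 := by
  set c : ℂ := (M * M').trace with hc
  have hanti : M * M' + M' * M = c • (1 : Matrix (Fin 2) (Fin 2) ℂ) :=
    anticomm_eq_trace_smul_one M M' hMtr hM'tr
  -- ρ₁ := (1 + M)/2 is a density matrix
  set ρ₁ : Matrix (Fin 2) (Fin 2) ℂ := (1/2 : ℂ) • (1 + M) with hρ₁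
  have hρ₁herm : ρ₁.IsHermitian := by
    unfold Matrix.IsHermitian
    rw [hρ₁]
    simp [Matrix.conjTranspose_smul, Matrix.conjTranspose_add, hM.eq]
  have hρ₁sq : ρ₁ * ρ₁ = ρ₁ := by
    rw [hρ₁]
    rw [Matrix.smul_mul, Matrix.mul_smul, smul_smul]
    rw [show (1 + M) * (1 + M) = (2:ℂ) • (1 + M) by
      have e : (1 + M) * (1 + M) = 1 + M + (M + M * M) := by noncomm_ring
      rw [e, hMinv, two_smul]; abel]
    rw [smul_smul, show (1/2 * (1/2) * 2 : ℂ) = 1/2 by norm_num]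
  have hρ₁psd : ρ₁.PosSemidef := by
    have : ρ₁ = ρ₁ᴴ * ρ₁ := by rw [hρ₁herm.eq, hρ₁sq]
    rw [this]; exact Matrix.posSemidef_conjTranspose_mul_self ρ₁
  have htr1 : (Matrix.trace (1 : Matrix (Fin 2) (Fin 2) ℂ)) = 2 := by
    simp [Matrix.trace, Fin.sum_univ_two]
  have hρ₁tr : ρ₁.trace = 1 := by
    rw [hρ₁, Matrix.trace_smul, Matrix.trace_add, htr1, hMtr]; norm_num
  obtain ⟨ρ₂, ρ₃, ρ₄, hd₂, _, _, h12, _, _, h12', _, _, _⟩ :=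
    horbit ρ₁ ⟨hρ₁psd, hρ₁tr⟩
  -- compute tr(M ρ₁) = 1 and tr(M' ρ₁) = c/2
  have hMρ₁ : (M * ρ₁).trace = 1 := by
    rw [hρ₁, Matrix.mul_smul, Matrix.trace_smul, Matrix.mul_add, Matrix.mul_one,
      Matrix.trace_add, hMtr, hMinv, htr1]
    norm_num
  have hM'ρ₁ : (M' * ρ₁).trace = c / 2 := by
    rw [hρ₁, Matrix.mul_smul, Matrix.trace_smul, Matrix.mul_add, Matrix.mul_one,
      Matrix.trace_add, hM'tr, hc, Matrix.trace_mul_comm M M', smul_eq_mul]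
    ring
  -- From tr(M ρ₂) = 1 deduce M ρ₂ = ρ₂
  obtain ⟨hρ₂psd, hρ₂tr⟩ := hd₂
  have hPpsd : ((1/2 : ℂ) • (1 - M)).PosSemidef := by
    set P : Matrix (Fin 2) (Fin 2) ℂ := (1/2 : ℂ) • (1 - M) with hP
    have hPherm : P.IsHermitian := by
      unfold Matrix.IsHermitian
      rw [hP]
      simp [Matrix.conjTranspose_smul, Matrix.conjTranspose_sub, hM.eq]
    have hPsq : P * P = P := by
      rw [hP, Matrix.smul_mul, Matrix.mul_smul, smul_smul]
      rw [show (1 - M) * (1 - M) = (2:ℂ) • (1 - M) by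
        have e : (1 - M) * (1 - M) = 1 - M - (M - M * M) := by noncomm_ring
        rw [e, hMinv, two_smul]; abel]
      rw [smul_smul, show (1/2 * (1/2) * 2 : ℂ) = 1/2 by norm_num]
    have : P = Pᴴ * P := by rw [hPherm.eq, hPsq]
    rw [this]; exact Matrix.posSemidef_conjTranspose_mul_self P
  have htrPρ₂ : (((1/2 : ℂ) • (1 - M)) * ρ₂).trace = 0 := by
    rw [Matrix.smul_mul, Matrix.trace_smul, Matrix.sub_mul, Matrix.one_mul,
      Matrix.trace_sub, hρ₂tr, ← hMρ₁, h12]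
    simp
  have hPρ₂ : ((1/2 : ℂ) • (1 - M)) * ρ₂ = 0 := psd_mul_psd_trace_zero hPpsd hρ₂psd htrPρ₂
  have hMρ₂ : M * ρ₂ = ρ₂ := by
    have h0 : (1 - M) * ρ₂ = 0 := by
      have := hPρ₂
      rw [Matrix.smul_mul] at this
      have h2 : (2:ℂ) • ((1/2 : ℂ) • ((1 - M) * ρ₂)) = (2:ℂ) • (0 : Matrix (Fin 2) (Fin 2) ℂ) := by
        rw [this]
      simpa [smul_smul] using h2
    have := sub_eq_zero.mp (by rw [Matrix.sub_mul, Matrix.one_mul] at h0; exact h0)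
    exact this.symm
  have hρ₂M : ρ₂ * M = ρ₂ := by
    have := congrArg Matrix.conjTranspose hMρ₂
    rw [Matrix.conjTranspose_mul, hM.eq, hρ₂psd.isHermitian.eq] at this
    exact this
  -- tr(M' ρ₂) = c/2
  have hM'ρ₂ : (M' * ρ₂).trace = c / 2 := by
    have key : M' * ρ₂ = c • ρ₂ - M * M' * ρ₂ := by
      calc M' * ρ₂ = (M' * M) * ρ₂ := by rw [Matrix.mul_assoc, hMρ₂]
        _ = (c • 1 - M * M') * ρ₂ := by
            rw [show M' * M = c • (1 : Matrix (Fin 2) (Fin 2) ℂ) - M * M' by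
              rw [← hanti]; abel]
        _ = c • ρ₂ - M * M' * ρ₂ := by
            rw [Matrix.sub_mul, Matrix.smul_mul, Matrix.one_mul]
    have htr := congrArg Matrix.trace key
    have h2 : (M * M' * ρ₂).trace = (M' * ρ₂).trace := by
      rw [Matrix.trace_mul_cycle, hρ₂M, Matrix.trace_mul_comm]
    rw [Matrix.trace_sub, Matrix.trace_smul, hρ₂tr, smul_eq_mul, mul_one, h2] at htr
    linear_combination htr / 2
  -- conclude c = 0
  have hczero : c = 0 := by
    have hcc := h12'
    rw [hM'ρ₁, hM'ρ₂] at hcc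
    linear_combination hcc
  rw [hanti, hczero, zero_smul]
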